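/- If (A), (B), (C) hold, then for every T ⊆ Σ, the biorthogonal T'' equals the set of superpositions T̄, and the map S ↦ S' is an orthocomplementation on F(Σ) = {S ⊆ Σ : S = S̄}, making F(Σ) a complete, atomistic, orthocomplemented lattice. -/

import Mathlib

universe u v

/-- A state property system: states, a complete lattice of properties, and
the actuality map `xi` assigning to each state the set of actual properties. -/
structure SPS (σ : Type u) (L : Type v) [CompleteLattice L] where
  xi : σ → Set L
  top_mem : ∀ p, ⊤ ∈ xi p
  bot_not_mem : ∀ p, ⊥ ∉ xi p
  sInf_mem : ∀ (p : σ) (A : Set L), (∀ a ∈ A, a ∈ xi p) ↔ sInf A ∈ xi p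
  le_iff : ∀ a b : L, a ≤ b ↔ ∀ r, a ∈ xi r → b ∈ xi r

variable {σ : Type u} {L : Type v} [CompleteLattice L]

/-- λ{p,q} : the set of superpositions of the pair p, q. -/
def SPS.lamPair (S : SPS σ L) (p q : σ) : Set σ := {s | S.xi p ∩ S.xi q ⊆ S.xi s}

/-- A set is λ-closed if it contains λ{p,q} for each pair of its points. -/
def SPS.lamClosed (S : SPS σ L) (T : Set σ) : Prop :=
  ∀ p ∈ T, ∀ q ∈ T, S.lamPair p q ⊆ T

/-- λ(P) : the intersection of all λ-closed sets containing P. -/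
def SPS.lam (S : SPS σ L) (P : Set σ) : Set σ :=
  ⋂₀ {G | S.lamClosed G ∧ P ⊆ G}

/-- The set of superpositions of a set of states. -/
def SPS.bar (S : SPS σ L) (T : Set σ) : Set σ :=
  {p | (⋂ s ∈ T, S.xi s) ⊆ S.xi p}

/-- Property (A): at least two states and `xi` order-reflecting (injective). -/
def SPS.propA (S : SPS σ L) : Prop :=
  (∃ p q : σ, p ≠ q) ∧ ∀ p q : σ, S.xi p ⊆ S.xi q → p = q

/-- p is a minimal superposition of A. -/
def SPS.minSup (S : SPS σ L) (A : Set σ) (p : σ) : Prop :=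
  p ∈ S.bar A ∧ ∀ Q : Set σ, Q ⊂ A → p ∉ S.bar Q

/-- The minimal superposition principle for a given set A. -/
def SPS.MSPon (S : SPS σ L) (A : Set σ) : Prop :=
  ∀ p : σ, S.minSup A p →
    ∀ S₁ S₂ : Set σ, S₁ ⊂ A → S₂ ⊂ A → S₁ ∩ S₂ = ∅ → S₁ ∪ S₂ = A →
      (S.bar (S₁ ∪ {p}) ∩ S.bar S₂).Nonempty

/-- n-MSP : MSP for all sets of cardinality at most n. -/
def SPS.nMSP (S : SPS σ L) (n : ℕ) : Prop :=
  ∀ A : Set σ, A.Finite → A.ncard ≤ n → S.MSPon A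

/-- f-MSP : MSP for all finite sets. -/
def SPS.fMSP (S : SPS σ L) : Prop := ∀ A : Set σ, A.Finite → S.MSPon A

/-- Probability structure on a subset `L0` of the property lattice:
`mu p a` is the probability of property `a` in state `p`, satisfying (Oi)-(Oiii). -/
structure ProbStruct (S : SPS σ L) (L0 : Set L) where
  bot_mem : (⊥ : L) ∈ L0
  top_mem : (⊤ : L) ∈ L0
  mu : σ → L → ℝ
  nonneg : ∀ p, ∀ a ∈ L0, 0 ≤ mu p a
  le_one : ∀ p, ∀ a ∈ L0, mu p a ≤ 1
  Oi : ∀ p, ∀ a ∈ L0, (mu p a = 1 ↔ a ∈ S.xi p)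
  Oii : ∀ p, ∀ a ∈ L0, ∀ b ∈ L0, a ≤ b → mu p a ≤ mu p b
  Oiii : ∀ a : ℕ → L, (∀ i, a i ∈ L0) →
    (∀ i j, i ≠ j → ∀ p, mu p (a i) + mu p (a j) ≤ 1) →
    ∃ b ∈ L0, ∀ p, HasSum (fun i => mu p (a i)) (1 - mu p b)

/-- `oc` is the orthocomplementation on `L0` associated with the probability structure. -/
def ocProp (S : SPS σ L) (L0 : Set L) (P : ProbStruct S L0) (oc : L → L) : Prop :=
  ∀ a ∈ L0, oc a ∈ L0 ∧ ∀ p, P.mu p a + P.mu p (oc a) = 1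

/-- The atom associated to a state: the smallest actual property. -/
def atomOf (S : SPS σ L) (p : σ) : L := sInf (S.xi p)

/-- Orthogonality of states: p ⊥ q iff some a ∈ L0 is actual in p with a' actual in q. -/
def statePerp (S : SPS σ L) (L0 : Set L) (oc : L → L) (p q : σ) : Prop :=
  ∃ a ∈ L0, a ∈ S.xi p ∧ oc a ∈ S.xi q

/-- T' : the set of states orthogonal to every state of T. -/
def setPerp (S : SPS σ L) (L0 : Set L) (oc : L → L) (T : Set σ) : Set σ :=
  {p | ∀ t ∈ T, statePerp S L0 oc p t}

section Aux

variable (S : SPS σ L) (L0 : Set L) (P : ProbStruct S L0) (oc : L → L)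

lemma atom_mem (p : σ) : atomOf S p ∈ S.xi p :=
  (S.sInf_mem p (S.xi p)).mp (fun _ h => h)

lemma mem_xi_iff {p : σ} {a : L} : a ∈ S.xi p ↔ atomOf S p ≤ a := by
  constructor
  · exact fun h => sInf_le h
  · intro h
    exact (S.le_iff _ _).mp h p (atom_mem S p)

lemma perp_iff (hoc : ocProp S L0 P oc) (hB : ∀ s : σ, atomOf S s ∈ L0) {p q : σ} :
    statePerp S L0 oc p q ↔ oc (atomOf S p) ∈ S.xi q := by
  constructor
  · rintro ⟨a, haL0, hap, haq⟩
    have hocL0 := (hoc a haL0).1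
    have h1 : P.mu q (oc a) = 1 := (P.Oi q _ hocL0).mpr haq
    have hsum := (hoc a haL0).2 q
    have hle : atomOf S p ≤ a := (mem_xi_iff S).mp hap
    have h2 : P.mu q (atomOf S p) ≤ P.mu q a := P.Oii q _ (hB p) a haL0 hle
    have h3 : 0 ≤ P.mu q (atomOf S p) := P.nonneg q _ (hB p)
    have hsum2 := (hoc _ (hB p)).2 q
    have h5 : P.mu q (oc (atomOf S p)) = 1 := by linarith
    exact (P.Oi q _ (hoc _ (hB p)).1).mp h5
  · intro h
    exact ⟨atomOf S p, hB p, atom_mem S p, h⟩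

lemma perp_symm (hoc : ocProp S L0 P oc) {p q : σ} (h : statePerp S L0 oc p q) : statePerp S L0 oc q p := by
  obtain ⟨a, haL0, hap, haq⟩ := h
  refine ⟨oc a, (hoc a haL0).1, haq, ?_⟩
  have h1 : P.mu p a = 1 := (P.Oi p a haL0).mpr hap
  have hsum := (hoc a haL0).2 p
  have hsum2 := (hoc (oc a) (hoc a haL0).1).2 p
  have h2 : P.mu p (oc (oc a)) = 1 := by linarith
  exact (P.Oi p _ (hoc _ (hoc a haL0).1).1).mp h2

lemma perp_irrefl (hoc : ocProp S L0 P oc) {p : σ} : ¬ statePerp S L0 oc p p := by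
  rintro ⟨a, haL0, h1, h2⟩
  have hsum := (hoc a haL0).2 p
  have m1 : P.mu p a = 1 := (P.Oi p a haL0).mpr h1
  have m2 : P.mu p (oc a) = 1 := (P.Oi p _ (hoc a haL0).1).mpr h2
  linarith

lemma mem_perp (hoc : ocProp S L0 P oc) (hB : ∀ s : σ, atomOf S s ∈ L0) {T : Set σ} {p : σ} :
    p ∈ setPerp S L0 oc T ↔ sInf ((fun t => oc (atomOf S t)) '' T) ∈ S.xi p := by
  rw [← S.sInf_mem]
  constructor
  · rintro h x ⟨t, ht, rfl⟩
    exact (perp_iff S L0 P oc hoc hB).mp (perp_symm S L0 P oc hoc (h t ht))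
  · intro h t ht
    exact perp_symm S L0 P oc hoc
      ((perp_iff S L0 P oc hoc hB).mpr (h _ ⟨t, ht, rfl⟩))

lemma mem_bar {T : Set σ} {p : σ} :
    p ∈ S.bar T ↔ atomOf S p ≤ sSup (atomOf S '' T) := by
  have hiff : ∀ a : L, (a ∈ ⋂ s ∈ T, S.xi s) ↔ sSup (atomOf S '' T) ≤ a := by
    intro a
    simp only [Set.mem_iInter]
    rw [sSup_le_iff]
    constructor
    · rintro h x ⟨t, ht, rfl⟩; exact (mem_xi_iff S).mp (h t ht)
    · intro h t ht; exact (mem_xi_iff S).mpr (h _ ⟨t, ht, rfl⟩)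
  constructor
  · intro h
    exact (mem_xi_iff S).mp (h ((hiff _).mpr le_rfl))
  · intro h a ha
    exact (mem_xi_iff S).mpr (le_trans h ((hiff a).mp ha))

lemma key_equiv (hoc : ocProp S L0 P oc) (hB : ∀ s : σ, atomOf S s ∈ L0) {T : Set σ} {q : σ} :
    sSup (atomOf S '' T) ≤ oc (atomOf S q) ↔
      sInf ((fun t => oc (atomOf S t)) '' T) ∈ S.xi q := by
  rw [← mem_perp S L0 P oc hoc hB, sSup_le_iff]
  constructor
  · intro h t ht
    exact (perp_iff S L0 P oc hoc hB).mpr ((mem_xi_iff S).mpr (h _ ⟨t, ht, rfl⟩))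
  · rintro h x ⟨t, ht, rfl⟩
    exact (mem_xi_iff S).mp ((perp_iff S L0 P oc hoc hB).mp (h t ht))

end Aux

theorem stmt15 (S : SPS σ L) (L0 : Set L) (P : ProbStruct S L0)
    (oc : L → L) (hoc : ocProp S L0 P oc)
    (hA : S.propA)
    (hB : ∀ s : σ, atomOf S s ∈ L0)
    (hC : ∀ b : L, b = sInf {x | ∃ s : σ, x = oc (atomOf S s) ∧ b ≤ x}) :
    -- the biorthogonal equals the set of superpositions
    (∀ T : Set σ, setPerp S L0 oc (setPerp S L0 oc T) = S.bar T) ∧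
    -- S ↦ S' is an orthocomplementation on F(Σ)
    (∀ T U : Set σ, T ⊆ U → setPerp S L0 oc U ⊆ setPerp S L0 oc T) ∧
    (∀ T : Set σ, S.bar T = T →
      S.bar (setPerp S L0 oc T) = setPerp S L0 oc T ∧
      setPerp S L0 oc (setPerp S L0 oc T) = T ∧
      T ∩ setPerp S L0 oc T = ∅ ∧
      S.bar (T ∪ setPerp S L0 oc T) = Set.univ) ∧
    -- F(Σ) is atomistic with singletons as atoms
    (∀ p : σ, S.bar {p} = {p}) := by
  have part1 : ∀ T : Set σ, setPerp S L0 oc (setPerp S L0 oc T) = S.bar T := by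
    intro T
    ext p
    rw [mem_bar]
    constructor
    · intro h
      conv_rhs => rw [hC (sSup (atomOf S '' T))]
      apply le_sInf
      rintro x ⟨q, rfl, hbx⟩
      have hq : q ∈ setPerp S L0 oc T :=
        (mem_perp S L0 P oc hoc hB).mpr ((key_equiv S L0 P oc hoc hB).mp hbx)
      exact (mem_xi_iff S).mp
        ((perp_iff S L0 P oc hoc hB).mp (perp_symm S L0 P oc hoc (h q hq)))
    · intro h q hq
      have hb : sSup (atomOf S '' T) ≤ oc (atomOf S q) :=
        (key_equiv S L0 P oc hoc hB).mpr ((mem_perp S L0 P oc hoc hB).mp hq)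
      exact perp_symm S L0 P oc hoc
        ((perp_iff S L0 P oc hoc hB).mpr ((mem_xi_iff S).mpr (h.trans hb)))
  refine ⟨part1, ?_, ?_, ?_⟩
  · intro T U hTU p hp t ht
    exact hp t (hTU ht)
  · intro T hT
    have barfix : S.bar (setPerp S L0 oc T) = setPerp S L0 oc T := by
      apply Set.Subset.antisymm
      · intro p hp
        rw [mem_perp S L0 P oc hoc hB]
        apply hp
        simp only [Set.mem_iInter]
        intro s hs
        exact (mem_perp S L0 P oc hoc hB).mp hs
      · intro p hp a ha
        simp only [Set.mem_iInter] at ha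
        exact ha p hp
    have hdisj : T ∩ setPerp S L0 oc T = ∅ := by
      rw [Set.eq_empty_iff_forall_notMem]
      rintro p ⟨hpT, hpT'⟩
      exact perp_irrefl S L0 P oc hoc (hpT' p hpT)
    refine ⟨barfix, by rw [part1 T, hT], hdisj, ?_⟩
    have hset : {x | ∃ s : σ, x = oc (atomOf S s) ∧
        sSup (atomOf S '' (T ∪ setPerp S L0 oc T)) ≤ x} = ∅ := by
      rw [Set.eq_empty_iff_forall_notMem]
      rintro x ⟨q, rfl, hle⟩
      have h1 : q ∈ setPerp S L0 oc T :=
        (mem_perp S L0 P oc hoc hB).mpr ((key_equiv S L0 P oc hoc hB).mp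
          (le_trans (sSup_le_sSup (Set.image_mono Set.subset_union_left)) hle))
      have h2 : q ∈ setPerp S L0 oc (setPerp S L0 oc T) :=
        (mem_perp S L0 P oc hoc hB).mpr ((key_equiv S L0 P oc hoc hB).mp
          (le_trans (sSup_le_sSup (Set.image_mono Set.subset_union_right)) hle))
      rw [part1 T, hT] at h2
      exact perp_irrefl S L0 P oc hoc (h1 q h2)
    have htop : sSup (atomOf S '' (T ∪ setPerp S L0 oc T)) = ⊤ := by
      conv_lhs => rw [hC (sSup (atomOf S '' (T ∪ setPerp S L0 oc T)))]
      rw [hset, sInf_empty]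
    ext p
    simp only [Set.mem_univ, iff_true]
    rw [mem_bar, htop]
    exact le_top
  · intro p
    ext q
    rw [mem_bar]
    simp only [Set.image_singleton, sSup_singleton, Set.mem_singleton_iff]
    constructor
    · intro h
      have hsub : S.xi p ⊆ S.xi q := fun a ha =>
        (mem_xi_iff S).mpr (h.trans ((mem_xi_iff S).mp ha))
      exact (hA.2 p q hsub).symm
    · rintro rfl
      exact le_rfl
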